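/- The function V₄(x) = (1/(15π²)) · [ (64/√x + 56√x + x^{3/2}/4) · E(√(1 - x/16)) - 2√x·(16 + x) · K(√(1 - x/16)) ] is strictly positive for every x ∈ (0, 16), where K and E are the complete elliptic integrals of the first and second kind. -/

import Mathlib

open Real

set_option maxHeartbeats 1000000

/-- Complete elliptic integral of the first kind. -/
noncomputable def ellipticK (k : ℝ) : ℝ :=
  ∫ θ in (0 : ℝ)..(Real.pi / 2), (1 - k ^ 2 * Real.sin θ ^ 2) ^ (-(1 : ℝ) / 2)

/-- Complete elliptic integral of the second kind. -/
noncomputable def ellipticE (k : ℝ) : ℝ :=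
  ∫ θ in (0 : ℝ)..(Real.pi / 2), (1 - k ^ 2 * Real.sin θ ^ 2) ^ ((1 : ℝ) / 2)

/-- The weight function `V₄(x)`. -/
noncomputable def weightV4 (x : ℝ) : ℝ :=
  (1 / (15 * Real.pi ^ 2)) *
    ((64 / Real.sqrt x + 56 * Real.sqrt x + x ^ ((3 : ℝ) / 2) / 4) *
        ellipticE (Real.sqrt (1 - x / 16)) -
      2 * Real.sqrt x * (16 + x) * ellipticK (Real.sqrt (1 - x / 16)))

private lemma bern_A1 (m : ℝ) (hm0 : 0 < m) (hm1 : m < 1) :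
    0 < 10240 - 40960*m + 67840*m^2 - 60160*m^3 + 30724*m^4 - 8968*m^5 + 1366*m^6
      - 82*m^7 + m^8/4 := by
  have hm : (0:ℝ) ≤ m := hm0.le
  have hn : (0:ℝ) ≤ 1 - m := by linarith
  nlinarith [pow_nonneg hn 8, mul_nonneg (pow_nonneg hm 1) (pow_nonneg hn 7),
    mul_nonneg (pow_nonneg hm 2) (pow_nonneg hn 6),
    mul_nonneg (pow_nonneg hm 3) (pow_nonneg hn 5),
    mul_nonneg (pow_nonneg hm 4) (pow_nonneg hn 4),
    mul_nonneg (pow_nonneg hm 5) (pow_nonneg hn 3),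
    mul_nonneg (pow_nonneg hm 6) (pow_nonneg hn 2),
    mul_nonneg (pow_nonneg hm 7) (pow_nonneg hn 1),
    pow_pos hm0 8]

private lemma bern_B1 (m : ℝ) (hm0 : 0 < m) (hm1 : m < 1) :
    0 < 10240 - 30720*m + 36096*m^2 - 20992*m^3 + 6144*m^4 - 768*m^5 + 16*m^6 := by
  have hm : (0:ℝ) ≤ m := hm0.le
  have hn : (0:ℝ) ≤ 1 - m := by linarith
  nlinarith [pow_nonneg hn 6, mul_nonneg (pow_nonneg hm 1) (pow_nonneg hn 5),
    mul_nonneg (pow_nonneg hm 2) (pow_nonneg hn 4),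
    mul_nonneg (pow_nonneg hm 3) (pow_nonneg hn 3),
    mul_nonneg (pow_nonneg hm 4) (pow_nonneg hn 2),
    mul_nonneg (pow_nonneg hm 5) (pow_nonneg hn 1),
    pow_pos hm0 6]

private lemma bern_q0 (m : ℝ) (hm0 : 0 < m) (hm1 : m < 1) :
    0 ≤ 524288 - 2621440*m + 5570560*m^2 - 6553600*m^3 + 4663296*m^4 - 2062336*m^5
      + 562944*m^6 - 91648*m^7 + 8260*m^8 - 324*m^9 + m^10 := by
  have hm : (0:ℝ) ≤ m := hm0.le
  have hn : (0:ℝ) ≤ 1 - m := by linarith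
  nlinarith [pow_nonneg hn 10, mul_nonneg (pow_nonneg hm 1) (pow_nonneg hn 9),
    mul_nonneg (pow_nonneg hm 2) (pow_nonneg hn 8),
    mul_nonneg (pow_nonneg hm 3) (pow_nonneg hn 7),
    mul_nonneg (pow_nonneg hm 4) (pow_nonneg hn 6),
    mul_nonneg (pow_nonneg hm 5) (pow_nonneg hn 5),
    mul_nonneg (pow_nonneg hm 6) (pow_nonneg hn 4),
    mul_nonneg (pow_nonneg hm 7) (pow_nonneg hn 3),
    mul_nonneg (pow_nonneg hm 8) (pow_nonneg hn 2),
    mul_nonneg (pow_nonneg hm 9) (pow_nonneg hn 1),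
    pow_nonneg hm 10]

private lemma bern_Q1 (m : ℝ) (hm0 : 0 < m) (hm1 : m < 1) :
    0 ≤ 524288 - 2621440*m + 5505024*m^2 - 6291456*m^3 + 4237312*m^4 - 1701888*m^5
      + 393984*m^6 - 48640*m^7 + 2880*m^8 - 64*m^9 := by
  have hm : (0:ℝ) ≤ m := hm0.le
  have hn : (0:ℝ) ≤ 1 - m := by linarith
  nlinarith [pow_nonneg hn 9, mul_nonneg (pow_nonneg hm 1) (pow_nonneg hn 8),
    mul_nonneg (pow_nonneg hm 2) (pow_nonneg hn 7),
    mul_nonneg (pow_nonneg hm 3) (pow_nonneg hn 6),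
    mul_nonneg (pow_nonneg hm 4) (pow_nonneg hn 5),
    mul_nonneg (pow_nonneg hm 5) (pow_nonneg hn 4),
    mul_nonneg (pow_nonneg hm 6) (pow_nonneg hn 3),
    mul_nonneg (pow_nonneg hm 7) (pow_nonneg hn 2),
    mul_nonneg (pow_nonneg hm 8) (pow_nonneg hn 1)]

private lemma bern_Q2 (m : ℝ) (hm0 : 0 < m) (hm1 : m < 1) :
    0 ≤ 262144 - 1048576*m + 1638400*m^2 - 1245184*m^3 + 464896*m^4 - 77824*m^5
      + 6400*m^6 - 256*m^7 + 4*m^8 := by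
  have hm : (0:ℝ) ≤ m := hm0.le
  have hn : (0:ℝ) ≤ 1 - m := by linarith
  nlinarith [pow_nonneg hn 8, mul_nonneg (pow_nonneg hm 1) (pow_nonneg hn 7),
    mul_nonneg (pow_nonneg hm 2) (pow_nonneg hn 6),
    mul_nonneg (pow_nonneg hm 3) (pow_nonneg hn 5),
    mul_nonneg (pow_nonneg hm 4) (pow_nonneg hn 4),
    mul_nonneg (pow_nonneg hm 5) (pow_nonneg hn 3),
    mul_nonneg (pow_nonneg hm 6) (pow_nonneg hn 2),
    mul_nonneg (pow_nonneg hm 7) (pow_nonneg hn 1),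
    pow_nonneg hm 8]

private lemma Fpos (m x : ℝ) (hm0 : 0 < m) (hm1 : m < 1) (hx : 0 < x)
    (hxlow : (1-m)*(1-m+m^2/4) ≤ x^2) :
    (2-m)^2*(8*(1-m)*(2-m))^4*((2-2*m+m^2/4)+2*x)
      < (2*x*((16-16*m+m^2)^2*x+(2-m)*(16-16*m+m^2)*(8*(1-m)*(2-m))-(8*(1-m)*(2-m))^2))^2 := by
  have hm : (0:ℝ) ≤ m := hm0.le
  have hn : (0:ℝ) < 1 - m := by linarith
  have hA1 : (0:ℝ) < 10240 - 40960*m + 67840*m^2 - 60160*m^3 + 30724*m^4 - 8968*m^5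
      + 1366*m^6 - 82*m^7 + m^8/4 := bern_A1 m hm0 hm1
  have hB1 : (0:ℝ) < 10240 - 30720*m + 36096*m^2 - 20992*m^3 + 6144*m^4 - 768*m^5
      + 16*m^6 := bern_B1 m hm0 hm1
  have hq0 : (0:ℝ) ≤ 524288 - 2621440*m + 5570560*m^2 - 6553600*m^3 + 4663296*m^4
      - 2062336*m^5 + 562944*m^6 - 91648*m^7 + 8260*m^8 - 324*m^9 + m^10 := bern_q0 m hm0 hm1
  have hQ1 : (0:ℝ) ≤ 524288 - 2621440*m + 5505024*m^2 - 6291456*m^3 + 4237312*m^4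
      - 1701888*m^5 + 393984*m^6 - 48640*m^7 + 2880*m^8 - 64*m^9 := bern_Q1 m hm0 hm1
  have hQ2 : (0:ℝ) ≤ 262144 - 1048576*m + 1638400*m^2 - 1245184*m^3 + 464896*m^4
      - 77824*m^5 + 6400*m^6 - 256*m^7 + 4*m^8 := bern_Q2 m hm0 hm1
  have hQ : (0:ℝ) ≤ (1-m) * (524288 - 2621440*m + 5570560*m^2 - 6553600*m^3 + 4663296*m^4
      - 2062336*m^5 + 562944*m^6 - 91648*m^7 + 8260*m^8 - 324*m^9 + m^10)
      + (524288 - 2621440*m + 5505024*m^2 - 6291456*m^3 + 4237312*m^4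
      - 1701888*m^5 + 393984*m^6 - 48640*m^7 + 2880*m^8 - 64*m^9) * x
      + (262144 - 1048576*m + 1638400*m^2 - 1245184*m^3 + 464896*m^4
      - 77824*m^5 + 6400*m^6 - 256*m^7 + 4*m^8) * x^2 :=
    add_nonneg (add_nonneg (mul_nonneg hn.le hq0) (mul_nonneg hQ1 hx.le))
      (mul_nonneg hQ2 (sq_nonneg x))
  have hgap : (0:ℝ) ≤ x^2 - (1-m)*(1-m+m^2/4) := by linarith
  have hR : (0:ℝ) < m^4*(1-m)^2*((10240 - 40960*m + 67840*m^2 - 60160*m^3 + 30724*m^4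
      - 8968*m^5 + 1366*m^6 - 82*m^7 + m^8/4)
      + (10240 - 30720*m + 36096*m^2 - 20992*m^3 + 6144*m^4 - 768*m^5 + 16*m^6) * x) := by
    have h1 : (0:ℝ) < m^4*(1-m)^2 := by positivity
    exact mul_pos h1 (add_pos hA1 (mul_pos hB1 hx))
  nlinarith [mul_nonneg hQ hgap, hR]

private lemma keyIneq (m w₁ w₂ σ₁ σ₂ : ℝ) (hm0 : 0 < m) (hm1 : m < 1)
    (hw1 : 0 < w₁) (hw12 : w₁ ≤ w₂)
    (hsum : w₁^2 + w₂^2 = 2 - 2*m + m^2/4) (hlow : 1 - m ≤ w₁^2)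
    (hs1 : 0 < σ₁) (hs2 : 0 < σ₂)
    (hσ1 : σ₁^2 = 2 - m + 2*w₁) (hσ2 : σ₂^2 = 2 - m + 2*w₂) :
    0 < σ₁ * ((16 - 16*m + m^2)*w₁ - 8*(1-m)*(2-m)) * w₂
      + σ₂ * ((16 - 16*m + m^2)*w₂ - 8*(1-m)*(2-m)) * w₁ := by
  have hb : (0:ℝ) < 16 - 16*m + m^2 := by nlinarith [sq_nonneg m]
  have hD : (0:ℝ) < 8*(1-m)*(2-m) := by nlinarith
  have hw2 : 0 < w₂ := lt_of_lt_of_le hw1 hw12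
  have hw12sq : w₁^2 ≤ w₂^2 := by nlinarith
  have hρ : 1 - m + m^2/8 ≤ w₂^2 := by nlinarith
  have hm4 : (0:ℝ) < m^4 * (5 - 5*m + m^2/8) := by
    have : (0:ℝ) < 5 - 5*m + m^2/8 := by nlinarith
    positivity
  have hid : (16-16*m+m^2)^2*(1-m+m^2/8) - (8*(1-m)*(2-m))^2 = m^4*(5-5*m+m^2/8) := by
    ring
  have hbsq : (8*(1-m)*(2-m))^2 < (16 - 16*m + m^2)^2 * w₂^2 := by
    have h1 := mul_le_mul_of_nonneg_left hρ (sq_nonneg (16 - 16*m + m^2))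
    linarith
  have hbw2 : 8*(1-m)*(2-m) < (16 - 16*m + m^2) * w₂ := by
    nlinarith [mul_pos hb hw2]
  rcases le_or_gt (8*(1-m)*(2-m)) ((16 - 16*m + m^2) * w₁) with hc | hc
  · have h1 : 0 ≤ σ₁ * ((16 - 16*m + m^2)*w₁ - 8*(1-m)*(2-m)) * w₂ :=
      mul_nonneg (mul_nonneg hs1.le (by linarith)) hw2.le
    have h2 : 0 < σ₂ * ((16 - 16*m + m^2)*w₂ - 8*(1-m)*(2-m)) * w₁ :=
      mul_pos (mul_pos hs2 (by linarith)) hw1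
    linarith
  · -- hard case
    have hne : w₁ < w₂ := by
      rcases lt_or_eq_of_le hw12 with h | h
      · exact h
      · exfalso; rw [h] at hc; linarith
    have hx : 0 < w₁ * w₂ := mul_pos hw1 hw2
    have hlow2 : 1 - m ≤ w₂^2 := by nlinarith
    have hxlow : (1-m)*(1-m+m^2/4) ≤ (w₁*w₂)^2 := by
      nlinarith [mul_nonneg (sub_nonneg.2 hlow) (sub_nonneg.2 hlow2)]
    have hF := Fpos m (w₁*w₂) hm0 hm1 hx hxlow
    have hT : (0:ℝ) < 2*(w₁*w₂)*((16-16*m+m^2)^2*(w₁*w₂)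
        +(2-m)*(16-16*m+m^2)*(8*(1-m)*(2-m))-(8*(1-m)*(2-m))^2) := by
      have h8 : (0:ℝ) < 8 - 8*m + m^2 := by nlinarith
      have h2m : (0:ℝ) < 2 - m := by linarith
      have e : (2-m)*(16-16*m+m^2)*(8*(1-m)*(2-m))-(8*(1-m)*(2-m))^2
          = (8*(1-m)*(2-m))*(2-m)*(8-8*m+m^2) := by ring
      nlinarith [mul_pos (mul_pos (mul_pos hD h2m) h8) hx,
        mul_pos (mul_pos (mul_pos hb hb) hx) hx]
    have hp : 0 < w₁ + w₂ := by linarith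
    have hp2 : (w₁ + w₂)^2 = (2 - 2*m + m^2/4) + 2*(w₁*w₂) := by linear_combination hsum
    have e : ((2-m)*(8*(1-m)*(2-m))^2*(w₁+w₂))^2
        = (2-m)^2*(8*(1-m)*(2-m))^4*((2-2*m+m^2/4)+2*(w₁*w₂)) := by
      linear_combination ((2-m)^2*(8*(1-m)*(2-m))^4) * hp2
    rw [← e] at hF
    have hΞ : (2-m)*(8*(1-m)*(2-m))^2*(w₁+w₂)
        < 2*(w₁*w₂)*((16-16*m+m^2)^2*(w₁*w₂)
          +(2-m)*(16-16*m+m^2)*(8*(1-m)*(2-m))-(8*(1-m)*(2-m))^2) :=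
      lt_of_pow_lt_pow_left₀ 2 hT.le hF
    have hEid : (2-m+2*w₂)*((16-16*m+m^2)*w₂-8*(1-m)*(2-m))^2*w₁^2
        - (2-m+2*w₁)*((16-16*m+m^2)*w₁-8*(1-m)*(2-m))^2*w₂^2
        = (w₂-w₁)*(2*(w₁*w₂)*((16-16*m+m^2)^2*(w₁*w₂)
          +(2-m)*(16-16*m+m^2)*(8*(1-m)*(2-m))-(8*(1-m)*(2-m))^2)
          - (2-m)*(8*(1-m)*(2-m))^2*(w₁+w₂)) := by ring
    have hEpos : 0 < (2-m+2*w₂)*((16-16*m+m^2)*w₂-8*(1-m)*(2-m))^2*w₁^2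
        - (2-m+2*w₁)*((16-16*m+m^2)*w₁-8*(1-m)*(2-m))^2*w₂^2 := by
      rw [hEid]
      exact mul_pos (by linarith) (by linarith)
    have hA' : 0 < σ₁ * (8*(1-m)*(2-m) - (16 - 16*m + m^2)*w₁) * w₂ :=
      mul_pos (mul_pos hs1 (by linarith)) hw2
    have hB' : 0 < σ₂ * ((16 - 16*m + m^2)*w₂ - 8*(1-m)*(2-m)) * w₁ :=
      mul_pos (mul_pos hs2 (by linarith)) hw1
    have e2 : (σ₂ * ((16 - 16*m + m^2)*w₂ - 8*(1-m)*(2-m)) * w₁)^2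
        - (σ₁ * (8*(1-m)*(2-m) - (16 - 16*m + m^2)*w₁) * w₂)^2
        = (2-m+2*w₂)*((16-16*m+m^2)*w₂-8*(1-m)*(2-m))^2*w₁^2
          - (2-m+2*w₁)*((16-16*m+m^2)*w₁-8*(1-m)*(2-m))^2*w₂^2 := by
      linear_combination (((16-16*m+m^2)*w₂-8*(1-m)*(2-m))^2*w₁^2) * hσ2
        - ((8*(1-m)*(2-m) - (16 - 16*m+m^2)*w₁)^2*w₂^2) * hσ1
    have hsq : (σ₁ * (8*(1-m)*(2-m) - (16 - 16*m + m^2)*w₁) * w₂)^2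
        < (σ₂ * ((16 - 16*m + m^2)*w₂ - 8*(1-m)*(2-m)) * w₁)^2 := by linarith
    have hfin := lt_of_pow_lt_pow_left₀ 2 hB'.le hsq
    linarith

private lemma sin_le_cos_aux (θ : ℝ) (h0 : 0 ≤ θ) (h8 : θ ≤ π/8) :
    Real.sin (2*θ) ≤ Real.cos (2*θ) := by
  have hπ := Real.pi_gt_three
  have hc := Real.cos_add (2*θ) (π/4)
  rw [Real.cos_pi_div_four, Real.sin_pi_div_four] at hc
  have hnn : 0 ≤ Real.cos (2*θ + π/4) := by
    apply Real.cos_nonneg_of_mem_Icc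
    constructor
    · nlinarith
    · nlinarith
  have h2 : (0:ℝ) < Real.sqrt 2 := Real.sqrt_pos.2 (by norm_num)
  nlinarith [hc, hnn, h2]

private lemma pointwise (m : ℝ) (hm0 : 0 < m) (hm1 : m < 1) (θ : ℝ)
    (h0 : 0 ≤ θ) (h8 : θ ≤ π/8) :
    0 < ((16 - 16*m + m^2) * Real.sqrt (1 - m * Real.sin θ ^ 2)
          - (8*(1-m)*(2-m)) * (Real.sqrt (1 - m * Real.sin θ ^ 2))⁻¹)
      + ((16 - 16*m + m^2) * Real.sqrt (1 - m * Real.sin (π/4 - θ) ^ 2)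
          - (8*(1-m)*(2-m)) * (Real.sqrt (1 - m * Real.sin (π/4 - θ) ^ 2))⁻¹)
      + ((16 - 16*m + m^2) * Real.sqrt (1 - m * Real.sin (π/4 + θ) ^ 2)
          - (8*(1-m)*(2-m)) * (Real.sqrt (1 - m * Real.sin (π/4 + θ) ^ 2))⁻¹)
      + ((16 - 16*m + m^2) * Real.sqrt (1 - m * Real.sin (π/2 - θ) ^ 2)
          - (8*(1-m)*(2-m)) * (Real.sqrt (1 - m * Real.sin (π/2 - θ) ^ 2))⁻¹) := by
  have hs4 : Real.sin (π/2 - θ) ^ 2 = 1 - Real.sin θ ^ 2 := by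
    rw [Real.sin_pi_div_two_sub, Real.cos_sq']
  have hs3 : Real.sin (π/4 + θ) ^ 2 = 1 - Real.sin (π/4 - θ) ^ 2 := by
    rw [show π/4 + θ = π/2 - (π/4 - θ) by ring, Real.sin_pi_div_two_sub, Real.cos_sq']
  rw [hs3, hs4]
  set α := Real.sin θ ^ 2 with hα
  set γ := Real.sin (π/4 - θ) ^ 2 with hγ
  have hα0 : 0 ≤ α := sq_nonneg _
  have hα1 : α ≤ 1 := Real.sin_sq_le_one θ
  have hγ0 : 0 ≤ γ := sq_nonneg _
  have hγ1 : γ ≤ 1 := Real.sin_sq_le_one _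
  -- trig identities
  have e1 : α*(1-α) = Real.sin (2*θ)^2/4 := by
    rw [Real.sin_two_mul, hα]
    linear_combination (-(Real.sin θ^2)) * (Real.sin_sq_add_cos_sq θ)
  have e2 : γ*(1-γ) = Real.cos (2*θ)^2/4 := by
    have h := Real.sin_two_mul (π/4 - θ)
    rw [show 2*(π/4 - θ) = π/2 - 2*θ by ring, Real.sin_pi_div_two_sub] at h
    rw [h, hγ]
    linear_combination (-(Real.sin (π/4 - θ)^2)) * (Real.sin_sq_add_cos_sq (π/4 - θ))
  have htrig : α*(1-α) + γ*(1-γ) = 1/4 := by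
    rw [e1, e2]
    have := Real.sin_sq_add_cos_sq (2*θ)
    linarith
  have hord : α*(1-α) ≤ γ*(1-γ) := by
    have hsin2θ : 0 ≤ Real.sin (2*θ) := by
      apply Real.sin_nonneg_of_nonneg_of_le_pi
      · linarith
      · have := Real.pi_gt_three; linarith
    have hcs := sin_le_cos_aux θ h0 h8
    have hsq : Real.sin (2*θ)^2 ≤ Real.cos (2*θ)^2 := pow_le_pow_left₀ hsin2θ hcs 2
    rw [e1, e2]; linarith
  -- positivity of the four radicands
  have hu1 : 0 < 1 - m*α := by
    have : m*α ≤ m := mul_le_of_le_one_right hm0.le hα1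
    linarith
  have hu4 : 0 < 1 - m*(1-α) := by
    have : m*(1-α) ≤ m := mul_le_of_le_one_right hm0.le (by linarith)
    linarith
  have hu2 : 0 < 1 - m*γ := by
    have : m*γ ≤ m := mul_le_of_le_one_right hm0.le hγ1
    linarith
  have hu3 : 0 < 1 - m*(1-γ) := by
    have : m*(1-γ) ≤ m := mul_le_of_le_one_right hm0.le (by linarith)
    linarith
  set a := Real.sqrt (1 - m*α) with hadef
  set b := Real.sqrt (1 - m*(1-α)) with hbdef
  set c := Real.sqrt (1 - m*γ) with hcdef
  set d := Real.sqrt (1 - m*(1-γ)) with hddef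
  have ha : 0 < a := Real.sqrt_pos.2 hu1
  have hb : 0 < b := Real.sqrt_pos.2 hu4
  have hc : 0 < c := Real.sqrt_pos.2 hu2
  have hd : 0 < d := Real.sqrt_pos.2 hu3
  have ha2 : a^2 = 1 - m*α := Real.sq_sqrt hu1.le
  have hb2 : b^2 = 1 - m*(1-α) := Real.sq_sqrt hu4.le
  have hc2 : c^2 = 1 - m*γ := Real.sq_sqrt hu2.le
  have hd2 : d^2 = 1 - m*(1-γ) := Real.sq_sqrt hu3.le
  have hw1 : 0 < a*b := mul_pos ha hb
  have hw2 : 0 < c*d := mul_pos hc hd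
  have hw1sq : (a*b)^2 = 1 - m + m^2*(α*(1-α)) := by
    rw [mul_pow, ha2, hb2]; ring
  have hw2sq : (c*d)^2 = 1 - m + m^2*(γ*(1-γ)) := by
    rw [mul_pow, hc2, hd2]; ring
  have hw12 : a*b ≤ c*d := by
    have hsqle : (a*b)^2 ≤ (c*d)^2 := by
      rw [hw1sq, hw2sq]
      have := mul_le_mul_of_nonneg_left hord (sq_nonneg m)
      linarith
    exact le_of_pow_le_pow_left₀ two_ne_zero hw2.le hsqle
  have hsum : (a*b)^2 + (c*d)^2 = 2 - 2*m + m^2/4 := by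
    rw [hw1sq, hw2sq]; linear_combination m^2 * htrig
  have hlow : 1 - m ≤ (a*b)^2 := by
    rw [hw1sq]
    have : 0 ≤ m^2*(α*(1-α)) := mul_nonneg (sq_nonneg m) (mul_nonneg hα0 (by linarith))
    linarith
  have hσ1 : (a+b)^2 = 2 - m + 2*(a*b) := by
    have h' : (a+b)^2 = a^2 + b^2 + 2*(a*b) := by ring
    rw [h', ha2, hb2]; ring
  have hσ2 : (c+d)^2 = 2 - m + 2*(c*d) := by
    have h' : (c+d)^2 = c^2 + d^2 + 2*(c*d) := by ring
    rw [h', hc2, hd2]; ring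
  have hkey := keyIneq m (a*b) (c*d) (a+b) (c+d) hm0 hm1 hw1 hw12 hsum hlow
    (by linarith) (by linarith) hσ1 hσ2
  have hexpand : ((16 - 16*m + m^2) * a - (8*(1-m)*(2-m)) * a⁻¹)
      + ((16 - 16*m + m^2) * c - (8*(1-m)*(2-m)) * c⁻¹)
      + ((16 - 16*m + m^2) * d - (8*(1-m)*(2-m)) * d⁻¹)
      + ((16 - 16*m + m^2) * b - (8*(1-m)*(2-m)) * b⁻¹)
      = ((a+b) * ((16 - 16*m + m^2)*(a*b) - 8*(1-m)*(2-m)) * (c*d)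
        + (c+d) * ((16 - 16*m + m^2)*(c*d) - 8*(1-m)*(2-m)) * (a*b)) / ((a*b)*(c*d)) := by
    field_simp
    ring
  rw [hexpand]
  exact div_pos hkey (mul_pos hw1 hw2)

private lemma integral_pos (m : ℝ) (hm0 : 0 < m) (hm1 : m < 1) :
    0 < ∫ θ in (0:ℝ)..(π/2),
      ((16 - 16*m + m^2) * Real.sqrt (1 - m * Real.sin θ ^ 2)
        - (8*(1-m)*(2-m)) * (Real.sqrt (1 - m * Real.sin θ ^ 2))⁻¹) := by
  set g : ℝ → ℝ := fun θ =>
    ((16 - 16*m + m^2) * Real.sqrt (1 - m * Real.sin θ ^ 2)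
      - (8*(1-m)*(2-m)) * (Real.sqrt (1 - m * Real.sin θ ^ 2))⁻¹) with hg
  have hπ := Real.pi_gt_three
  have hu : ∀ θ : ℝ, 0 < 1 - m * Real.sin θ ^ 2 := by
    intro θ
    have h1 : Real.sin θ ^ 2 ≤ 1 := Real.sin_sq_le_one θ
    have : m * Real.sin θ ^ 2 ≤ m := mul_le_of_le_one_right hm0.le h1
    linarith
  have hcont : Continuous g := by
    have hin : Continuous fun θ : ℝ => 1 - m * Real.sin θ ^ 2 := by continuity
    have hsq : Continuous fun θ : ℝ => Real.sqrt (1 - m * Real.sin θ ^ 2) :=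
      Real.continuous_sqrt.comp hin
    apply Continuous.sub
    · exact continuous_const.mul hsq
    · exact continuous_const.mul (hsq.inv₀ fun θ => (Real.sqrt_pos.2 (hu θ)).ne')
  have hint : ∀ a b : ℝ, IntervalIntegrable g MeasureTheory.volume a b :=
    fun a b => hcont.intervalIntegrable a b
  have hcomp : ∀ (c : ℝ) (s : ℝ), Continuous fun θ : ℝ => g (c + s * θ) := by
    intro c s; exact hcont.comp (by continuity)
  -- split [0, π/2] into four pieces
  have h1 : (∫ θ in (0:ℝ)..(π/8), g θ) + (∫ θ in (π/8:ℝ)..(π/4), g θ)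
      = ∫ θ in (0:ℝ)..(π/4), g θ :=
    intervalIntegral.integral_add_adjacent_intervals (hint _ _) (hint _ _)
  have h2 : (∫ θ in (0:ℝ)..(π/4), g θ) + (∫ θ in (π/4:ℝ)..(3*π/8), g θ)
      = ∫ θ in (0:ℝ)..(3*π/8), g θ :=
    intervalIntegral.integral_add_adjacent_intervals (hint _ _) (hint _ _)
  have h3 : (∫ θ in (0:ℝ)..(3*π/8), g θ) + (∫ θ in (3*π/8:ℝ)..(π/2), g θ)
      = ∫ θ in (0:ℝ)..(π/2), g θ :=
    intervalIntegral.integral_add_adjacent_intervals (hint _ _) (hint _ _)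
  -- changes of variables
  have c2 : (∫ θ in (0:ℝ)..(π/8), g (π/4 - θ)) = ∫ θ in (π/8:ℝ)..(π/4), g θ := by
    rw [intervalIntegral.integral_comp_sub_left g (π/4)]
    rw [show π/4 - π/8 = π/8 by ring, show π/4 - 0 = π/4 by ring]
  have c3 : (∫ θ in (0:ℝ)..(π/8), g (π/4 + θ)) = ∫ θ in (π/4:ℝ)..(3*π/8), g θ := by
    rw [intervalIntegral.integral_comp_add_left g (π/4)]
    rw [show π/4 + 0 = π/4 by ring, show π/4 + π/8 = 3*π/8 by ring]
  have c4 : (∫ θ in (0:ℝ)..(π/8), g (π/2 - θ)) = ∫ θ in (3*π/8:ℝ)..(π/2), g θ := by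
    rw [intervalIntegral.integral_comp_sub_left g (π/2)]
    rw [show π/2 - π/8 = 3*π/8 by ring, show π/2 - 0 = π/2 by ring]
  -- sum of the four integrals
  have hi1 : IntervalIntegrable (fun θ => g (π/4 - θ)) MeasureTheory.volume 0 (π/8) :=
    (hcont.comp (by continuity)).intervalIntegrable _ _
  have hi2 : IntervalIntegrable (fun θ => g (π/4 + θ)) MeasureTheory.volume 0 (π/8) :=
    (hcont.comp (by continuity)).intervalIntegrable _ _
  have hi3 : IntervalIntegrable (fun θ => g (π/2 - θ)) MeasureTheory.volume 0 (π/8) :=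
    (hcont.comp (by continuity)).intervalIntegrable _ _
  have hsum : (∫ θ in (0:ℝ)..(π/8), (g θ + g (π/4 - θ) + g (π/4 + θ) + g (π/2 - θ)))
      = (∫ θ in (0:ℝ)..(π/8), g θ) + (∫ θ in (0:ℝ)..(π/8), g (π/4 - θ))
        + (∫ θ in (0:ℝ)..(π/8), g (π/4 + θ)) + (∫ θ in (0:ℝ)..(π/8), g (π/2 - θ)) := by
    rw [intervalIntegral.integral_add (((hint 0 (π/8)).add hi1).add hi2) hi3,
      intervalIntegral.integral_add ((hint 0 (π/8)).add hi1) hi2,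
      intervalIntegral.integral_add (hint 0 (π/8)) hi1]
  have hpos : 0 < ∫ θ in (0:ℝ)..(π/8), (g θ + g (π/4 - θ) + g (π/4 + θ) + g (π/2 - θ)) := by
    apply intervalIntegral.intervalIntegral_pos_of_pos_on
    · exact (((hint 0 (π/8)).add hi1).add hi2).add hi3
    · intro θ hθ
      exact pointwise m hm0 hm1 θ hθ.1.le hθ.2.le
    · linarith
  rw [hsum, c2, c3, c4] at hpos
  linarith

/-- `V₄` is strictly positive on `(0, 16)`. -/
theorem weightV4_pos (x : ℝ) (hx0 : 0 < x) (hx1 : x < 16) : 0 < weightV4 x := by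
  have h16 : (0:ℝ) ≤ 1 - x / 16 := by linarith
  set m : ℝ := 1 - x/16 with hmdef
  have hm0 : 0 < m := by simp only [hmdef]; linarith
  have hm1 : m < 1 := by simp only [hmdef]; linarith
  have hksq : Real.sqrt (1 - x/16) ^ 2 = m := Real.sq_sqrt h16
  have hu : ∀ θ : ℝ, 0 < 1 - m * Real.sin θ ^ 2 := by
    intro θ
    have h1 : Real.sin θ ^ 2 ≤ 1 := Real.sin_sq_le_one θ
    have : m * Real.sin θ ^ 2 ≤ m := mul_le_of_le_one_right hm0.le h1
    linarith
  -- rewrite elliptic integrals via sqrt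
  have hE : ellipticE (Real.sqrt (1 - x/16))
      = ∫ θ in (0:ℝ)..(π/2), Real.sqrt (1 - m * Real.sin θ ^ 2) := by
    unfold ellipticE
    apply intervalIntegral.integral_congr
    intro θ _
    simp only [hksq]
    show (1 - m * Real.sin θ ^ 2) ^ ((1:ℝ)/2) = Real.sqrt (1 - m * Real.sin θ ^ 2)
    exact (Real.sqrt_eq_rpow _).symm
  have hK : ellipticK (Real.sqrt (1 - x/16))
      = ∫ θ in (0:ℝ)..(π/2), (Real.sqrt (1 - m * Real.sin θ ^ 2))⁻¹ := by
    unfold ellipticK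
    apply intervalIntegral.integral_congr
    intro θ _
    simp only [hksq]
    show (1 - m * Real.sin θ ^ 2) ^ (-(1:ℝ)/2) = (Real.sqrt (1 - m * Real.sin θ ^ 2))⁻¹
    rw [show (-(1:ℝ))/2 = -(1/2) by norm_num, Real.rpow_neg (hu θ).le,
      ← Real.sqrt_eq_rpow]
  -- continuity / integrability
  have hin : Continuous fun θ : ℝ => 1 - m * Real.sin θ ^ 2 := by continuity
  have hsqc : Continuous fun θ : ℝ => Real.sqrt (1 - m * Real.sin θ ^ 2) :=
    Real.continuous_sqrt.comp hin
  have hinvc : Continuous fun θ : ℝ => (Real.sqrt (1 - m * Real.sin θ ^ 2))⁻¹ :=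
    hsqc.inv₀ fun θ => (Real.sqrt_pos.2 (hu θ)).ne'
  -- scalar identities
  have hsx : 0 < Real.sqrt x := Real.sqrt_pos.2 hx0
  have hxsq : Real.sqrt x ^ 2 = x := Real.sq_sqrt hx0.le
  have hx32 : x ^ ((3:ℝ)/2) = x * Real.sqrt x := by
    rw [show ((3:ℝ)/2) = 1 + 1/2 by norm_num, Real.rpow_add hx0, Real.rpow_one,
      ← Real.sqrt_eq_rpow]
  have hA : 64 / Real.sqrt x + 56 * Real.sqrt x + x ^ ((3:ℝ)/2) / 4
      = 64 / Real.sqrt x * (16 - 16*m + m^2) := by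
    rw [hx32, hmdef]
    field_simp
    linear_combination (57344 + 256*x) * hxsq
  have hB : 2 * Real.sqrt x * (16 + x) = 64 / Real.sqrt x * (8*(1-m)*(2-m)) := by
    rw [hmdef]
    field_simp
    linear_combination (8192 + 512*x) * hxsq
  -- combine integrals
  have hIsub : (∫ θ in (0:ℝ)..(π/2),
      ((16 - 16*m + m^2) * Real.sqrt (1 - m * Real.sin θ ^ 2)
        - (8*(1-m)*(2-m)) * (Real.sqrt (1 - m * Real.sin θ ^ 2))⁻¹))
      = (16 - 16*m + m^2) * (∫ θ in (0:ℝ)..(π/2), Real.sqrt (1 - m * Real.sin θ ^ 2))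
        - (8*(1-m)*(2-m)) * (∫ θ in (0:ℝ)..(π/2), (Real.sqrt (1 - m * Real.sin θ ^ 2))⁻¹) := by
    rw [intervalIntegral.integral_sub (f := fun θ => (16 - 16*m + m^2) * Real.sqrt (1 - m * Real.sin θ ^ 2))
      (g := fun θ => (8*(1-m)*(2-m)) * (Real.sqrt (1 - m * Real.sin θ ^ 2))⁻¹)
      ((continuous_const.mul hsqc).intervalIntegrable _ _)
      ((continuous_const.mul hinvc).intervalIntegrable _ _),
      intervalIntegral.integral_const_mul, intervalIntegral.integral_const_mul]
  have hI := integral_pos m hm0 hm1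
  rw [hIsub] at hI
  unfold weightV4
  rw [hE, hK, hA, hB]
  have hfactor : 64 / Real.sqrt x * (16 - 16*m + m^2)
        * (∫ θ in (0:ℝ)..(π/2), Real.sqrt (1 - m * Real.sin θ ^ 2))
      - 64 / Real.sqrt x * (8*(1-m)*(2-m))
        * (∫ θ in (0:ℝ)..(π/2), (Real.sqrt (1 - m * Real.sin θ ^ 2))⁻¹)
      = 64 / Real.sqrt x
        * ((16 - 16*m + m^2) * (∫ θ in (0:ℝ)..(π/2), Real.sqrt (1 - m * Real.sin θ ^ 2))
          - (8*(1-m)*(2-m)) * (∫ θ in (0:ℝ)..(π/2), (Real.sqrt (1 - m * Real.sin θ ^ 2))⁻¹)) := by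
    ring
  rw [hfactor]
  have hπ := Real.pi_pos
  apply mul_pos
  · positivity
  · exact mul_pos (div_pos (by norm_num) hsx) hI
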